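/- Let G be the group ⟨a, b | a^k = b^{ql} = 1, b a b^{-1} = a^n⟩ with q prime, n^q ≡ 1 (mod k), n ≢ 1 (mod k), and c = gcd(n-1, k). If q does not divide j, then the conjugacy class of a^i b^j in G is {a^{i + hc} b^j : h = 0, 1, ..., k/c - 1} and has exactly k/c elements. -/

import Mathlib

theorem stmt_8 {G : Type*} [Group G] [Fintype G] (k q l : ℕ) (n : ℤ) (a b : G)
    (hk : 0 < k) (hl : 0 < l) (hq : q.Prime)
    (hnq : n ^ q ≡ 1 [ZMOD (k : ℤ)]) (hn1 : ¬ n ≡ 1 [ZMOD (k : ℤ)])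
    (hoa : orderOf a = k) (hob : orderOf b = q * l)
    (hrel : b * a * b⁻¹ = a ^ n)
    (hgen : Subgroup.closure ({a, b} : Set G) = ⊤)
    (hcard : Fintype.card G = k * q * l)
    (i : ℤ) (j : ℕ) (hj : ¬ q ∣ j) :
    {g : G | IsConj (a ^ i * b ^ j) g}
        = {g : G | ∃ h : ℕ, h < k / Int.gcd (n - 1) (k : ℤ) ∧
            g = a ^ (i + (h : ℤ) * (Int.gcd (n - 1) (k : ℤ) : ℤ)) * b ^ j} ∧
    {g : G | IsConj (a ^ i * b ^ j) g}.ncard = k / Int.gcd (n - 1) (k : ℤ) := by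
  classical
  set c : ℕ := Int.gcd (n - 1) (k : ℤ) with hcdef
  have hcZ1 : (c : ℤ) ∣ n - 1 := Int.gcd_dvd_left _ _
  have hcZ2 : (c : ℤ) ∣ (k : ℤ) := Int.gcd_dvd_right _ _
  have hck : c ∣ k := by exact_mod_cast hcZ2
  have hc0 : 0 < c := Int.gcd_pos_iff.mpr (Or.inr (by exact_mod_cast hk.ne'))
  set N : ℕ := k / c with hNdef
  have hNc : N * c = k := Nat.div_mul_cancel hck
  have hN0 : 0 < N := Nat.div_pos (Nat.le_of_dvd hk hck) hc0
  -- conjugation key lemma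
  have key : ∀ (v : ℕ) (m : ℤ), b ^ v * a ^ m * (b ^ v)⁻¹ = a ^ (m * n ^ v) := by
    have key0 : ∀ m : ℤ, b * a ^ m * b⁻¹ = a ^ (m * n) := by
      intro m; rw [← conj_zpow, hrel, ← zpow_mul, mul_comm]
    intro v
    induction v with
    | zero => intro m; simp
    | succ v ih =>
      intro m
      have h1 : b ^ (v+1) * a ^ m * (b ^ (v+1))⁻¹ = b * (b ^ v * a ^ m * (b ^ v)⁻¹) * b⁻¹ := by
        rw [pow_succ']; simp [mul_assoc]
      rw [h1, ih, key0, pow_succ]; ring_nf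
  have key2 : ∀ (v : ℕ) (m : ℤ), b ^ v * a ^ m = a ^ (m * n ^ v) * b ^ v := by
    intro v m
    have := key v m
    rw [← this]; simp [mul_assoc]
  -- a^x = a^y criterion
  have hzp : ∀ x y : ℤ, (k : ℤ) ∣ x - y → (a : G) ^ x = a ^ y := by
    intro x y hxy
    have h1 : a ^ (x - y) = 1 := by
      rw [← orderOf_dvd_iff_zpow_eq_one, hoa]; exact hxy
    calc a ^ x = a ^ (y + (x - y)) := by ring_nf
    _ = a ^ y * a ^ (x - y) := zpow_add a y (x - y)
    _ = a ^ y := by rw [h1, mul_one]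
  -- normal form
  have hnf : ∀ g : G, ∃ (u : ℤ) (v : ℕ), g = a ^ u * b ^ v := by
    intro g
    have hg : g ∈ Subgroup.closure ({a, b} : Set G) := by rw [hgen]; exact Subgroup.mem_top g
    induction hg using Subgroup.closure_induction with
    | mem x hx =>
      rcases hx with hx | hx
      · exact ⟨1, 0, by simp [hx]⟩
      · exact ⟨0, 1, by simp at hx; simp [hx]⟩
    | one => exact ⟨0, 0, by simp⟩
    | mul x y hx hy ihx ihy =>
      obtain ⟨u, v, rfl⟩ := ihx
      obtain ⟨u', v', rfl⟩ := ihy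
      refine ⟨u + u' * n ^ v, v + v', ?_⟩
      rw [zpow_add, mul_assoc, mul_assoc, ← mul_assoc (b ^ v), key2 v u', pow_add]
      simp [mul_assoc]
    | inv x hx ihx =>
      obtain ⟨u, v, rfl⟩ := ihx
      refine ⟨-u * n ^ ((q * l - 1) * v), (q * l - 1) * v, ?_⟩
      rw [← key2]
      have hb : b ^ ((q * l - 1) * v) = (b ^ v)⁻¹ := by
        rw [eq_inv_iff_mul_eq_one, ← pow_add]
        have : (q * l - 1) * v + v = (q * l) * v := by
          have h1 : 0 < q * l := Nat.mul_pos hq.pos hl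
          rw [Nat.sub_one_mul]
          exact Nat.sub_add_cancel (Nat.le_mul_of_pos_left v h1)
        rw [this, pow_mul, ← hob, pow_orderOf_eq_one, one_pow]
      rw [hb, mul_inv_rev, zpow_neg]
  -- conjugation formula
  have conj_formula : ∀ (u : ℤ) (v : ℕ),
      (a ^ u * b ^ v) * (a ^ i * b ^ j) * (a ^ u * b ^ v)⁻¹
        = a ^ (u + i * n ^ v - u * n ^ j) * b ^ j := by
    intro u v
    have e1 : b ^ v * a ^ i * (b ^ v)⁻¹ = a ^ (i * n ^ v) := key v i
    have e2 : b ^ j * a ^ (-u) * (b ^ j)⁻¹ = a ^ (-u * n ^ j) := key j (-u)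
    have step1 : (a ^ u * b ^ v) * (a ^ i * b ^ j) * (a ^ u * b ^ v)⁻¹
        = a ^ u * (b ^ v * a ^ i * (b ^ v)⁻¹) * (b ^ j * a ^ (-u) * (b ^ j)⁻¹) * b ^ j := by
      have hcomm : b ^ j * (b ^ v)⁻¹ = (b ^ v)⁻¹ * b ^ j :=
        ((Commute.refl b).pow_pow j v).inv_right.eq
      rw [mul_inv_rev]
      rw [zpow_neg] at e2 ⊢
      calc a ^ u * b ^ v * (a ^ i * b ^ j) * ((b ^ v)⁻¹ * (a ^ u)⁻¹)
          = a ^ u * (b ^ v * a ^ i) * (b ^ j * (b ^ v)⁻¹) * (a ^ u)⁻¹ := by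
            simp [mul_assoc]
        _ = a ^ u * (b ^ v * a ^ i) * ((b ^ v)⁻¹ * b ^ j) * (a ^ u)⁻¹ := by rw [hcomm]
        _ = a ^ u * (b ^ v * a ^ i * (b ^ v)⁻¹) * (b ^ j * (a ^ u)⁻¹ * (b ^ j)⁻¹) * b ^ j := by
            simp [mul_assoc]
    rw [step1, e1, e2, ← zpow_add, ← zpow_add]
    congr 2
    ring
  -- arithmetic: gcd(n^j - 1, k) divides c
  have hgd : (Int.gcd (n ^ j - 1) (k : ℤ) : ℤ) ∣ (c : ℤ) := by
    have hcop : Nat.Coprime j q := (Nat.coprime_comm.mp ((hq.coprime_iff_not_dvd).mpr hj))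
    obtain ⟨m, -, hm⟩ := Nat.exists_mul_mod_eq_one_of_coprime hcop hq.one_lt
    have hjm1 : 1 ≤ j * m := by
      rcases Nat.eq_zero_or_pos (j * m) with h0 | h0
      · rw [h0, Nat.zero_mod] at hm; omega
      · exact h0
    have hqd : q ∣ j * m - 1 := (Nat.modEq_iff_dvd' hjm1).mp (by
      show 1 % q = j * m % q
      rw [hm, Nat.mod_eq_of_lt hq.one_lt])
    obtain ⟨t, ht⟩ := hqd
    have hjm : j * m = 1 + q * t := by omega
    set g' := Int.gcd (n ^ j - 1) (k : ℤ) with hg'def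
    have hg'1 : (g' : ℤ) ∣ n ^ (j * m) - 1 := by
      refine dvd_trans (Int.gcd_dvd_left _ _) ?_
      have := sub_dvd_pow_sub_pow (n ^ j) 1 m
      rwa [← pow_mul, one_pow] at this
    have hkqt : (k : ℤ) ∣ n ^ (q * t) - 1 := by
      have h1 : (k : ℤ) ∣ n ^ q - 1 := Int.ModEq.dvd hnq.symm
      refine dvd_trans h1 ?_
      have := sub_dvd_pow_sub_pow (n ^ q) 1 t
      rwa [← pow_mul, one_pow] at this
    have hg'2 : (g' : ℤ) ∣ n ^ (j * m) - n := by
      have heq : n ^ (j * m) - n = n * (n ^ (q * t) - 1) := by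
        rw [hjm, pow_add, pow_one]; ring
      rw [heq]
      exact dvd_trans (Int.gcd_dvd_right _ _) (Dvd.dvd.mul_left hkqt n)
    have : (g' : ℤ) ∣ n - 1 := by
      have := dvd_sub hg'1 hg'2
      simpa using this
    exact_mod_cast Int.dvd_gcd this (Int.gcd_dvd_right _ _)
  -- set equality
  have hseteq : {g : G | IsConj (a ^ i * b ^ j) g}
      = {g : G | ∃ h : ℕ, h < N ∧ g = a ^ (i + (h : ℤ) * (c : ℤ)) * b ^ j} := by
    ext g
    simp only [Set.mem_setOf_eq]
    constructor
    · intro hg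
      obtain ⟨w, hw⟩ := isConj_iff.mp hg
      obtain ⟨u, v, rfl⟩ := hnf w
      rw [conj_formula u v] at hw
      set E : ℤ := u + i * n ^ v - u * n ^ j with hE
      have hcE : (c : ℤ) ∣ E - i := by
        have h1 : (c : ℤ) ∣ n ^ v - 1 := dvd_trans hcZ1 (by
          have := sub_dvd_pow_sub_pow n 1 v; rwa [one_pow] at this)
        have h2 : (c : ℤ) ∣ n ^ j - 1 := dvd_trans hcZ1 (by
          have := sub_dvd_pow_sub_pow n 1 j; rwa [one_pow] at this)
        have heq : E - i = i * (n ^ v - 1) - u * (n ^ j - 1) := by rw [hE]; ring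
        rw [heq]
        exact dvd_sub (Dvd.dvd.mul_left h1 i) (Dvd.dvd.mul_left h2 u)
      obtain ⟨d, hd⟩ := hcE
      refine ⟨(d % (N : ℤ)).toNat, ?_, ?_⟩
      · rw [← Nat.cast_lt (α := ℤ), Int.toNat_of_nonneg (Int.emod_nonneg d (by exact_mod_cast hN0.ne'))]
        exact Int.emod_lt_of_pos d (by exact_mod_cast hN0)
      · rw [← hw]
        congr 1
        apply hzp
        have htn : ((d % (N : ℤ)).toNat : ℤ) = d % (N : ℤ) :=
          Int.toNat_of_nonneg (Int.emod_nonneg d (by exact_mod_cast hN0.ne'))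
        rw [htn]
        have : E - (i + d % (N : ℤ) * (c : ℤ)) = (c : ℤ) * (d - d % (N : ℤ)) := by
          rw [← sub_sub, hd]; ring
        rw [this]
        have hdN : d - d % (N : ℤ) = (N : ℤ) * (d / N) := by
          rw [Int.emod_def]; ring
        rw [hdN, ← mul_assoc]
        have : (c : ℤ) * (N : ℤ) = (k : ℤ) := by
          rw [← Nat.cast_mul, mul_comm c N, hNc]
        rw [this]
        exact Dvd.intro _ rfl
    · rintro ⟨h, hhN, rfl⟩
      set g' := Int.gcd (n ^ j - 1) (k : ℤ) with hg'def
      obtain ⟨d, hd⟩ := hgd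
      set A := (n ^ j - 1).gcdA (k : ℤ) with hA
      set B := (n ^ j - 1).gcdB (k : ℤ) with hB
      have hbez : (g' : ℤ) = (n ^ j - 1) * A + (k : ℤ) * B := Int.gcd_eq_gcd_ab _ _
      set s : ℤ := -((h : ℤ) * d * A) with hs
      rw [isConj_iff]
      refine ⟨a ^ s, ?_⟩
      have h0 := conj_formula s 0
      simp only [pow_zero, mul_one] at h0
      rw [h0]
      congr 1
      apply hzp
      have : s + i - s * n ^ j - (i + (h : ℤ) * (c : ℤ))
          = -((h : ℤ) * d * B) * (k : ℤ) := by
        rw [hs, hd, hbez]; ring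
      rw [this]
      exact Dvd.intro_left _ rfl
  constructor
  · exact hseteq
  · rw [hseteq]
    have himg : {g : G | ∃ h : ℕ, h < N ∧ g = a ^ (i + (h : ℤ) * (c : ℤ)) * b ^ j}
        = ↑((Finset.range N).image (fun h : ℕ => a ^ (i + (h : ℤ) * (c : ℤ)) * b ^ j)) := by
      ext g
      simp only [Set.mem_setOf_eq, Finset.coe_image, Set.mem_image, Finset.mem_coe,
        Finset.mem_range]
      constructor
      · rintro ⟨h, h1, rfl⟩; exact ⟨h, h1, rfl⟩
      · rintro ⟨h, h1, rfl⟩; exact ⟨h, h1, rfl⟩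
    rw [himg, Set.ncard_coe_finset]
    rw [Finset.card_image_of_injOn, Finset.card_range]
    intro h1 hm1 h2 hm2 heq
    simp only [Finset.coe_range, Set.mem_Iio] at hm1 hm2
    have heq2 : (a : G) ^ (i + (h1 : ℤ) * (c : ℤ)) = a ^ (i + (h2 : ℤ) * (c : ℤ)) :=
      mul_right_cancel heq
    rw [zpow_add, zpow_add] at heq2
    have heq3 : (a : G) ^ ((h1 : ℤ) * (c : ℤ)) = a ^ ((h2 : ℤ) * (c : ℤ)) :=
      mul_left_cancel heq2
    have heq4 : (a : G) ^ (h1 * c) = a ^ (h2 * c) := by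
      have e1 : ((h1 * c : ℕ) : ℤ) = (h1 : ℤ) * (c : ℤ) := by push_cast; ring
      have e2 : ((h2 * c : ℕ) : ℤ) = (h2 : ℤ) * (c : ℤ) := by push_cast; ring
      rw [← zpow_natCast, ← zpow_natCast, e1, e2, heq3]
    have hmod : h1 * c ≡ h2 * c [MOD k] := by
      have := pow_eq_pow_iff_modEq.mp heq4
      rwa [hoa] at this
    have hlt1 : h1 * c < k := by
      calc h1 * c < N * c := by exact (Nat.mul_lt_mul_right hc0).mpr hm1
      _ = k := hNc
    have hlt2 : h2 * c < k := by
      calc h2 * c < N * c := by exact (Nat.mul_lt_mul_right hc0).mpr hm2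
      _ = k := hNc
    have := hmod.eq_of_lt_of_lt hlt1 hlt2
    exact Nat.eq_of_mul_eq_mul_right hc0 this
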